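/- For every u ∈ WI₁ and every v ∈ WI₂, the set ⋂_{k≥0} (v∘u)^k([0,1)) has Lebesgue measure zero. -/

import Mathlib

open MeasureTheory Set Real Filter
open scoped symmDiff Classical

noncomputable section

/-- The Littlewood–Paley set `E = [-2π,-π) ∪ [π,2π)`. -/
def E : Set ℝ := Ico (-(2*π)) (-π) ∪ Ico π (2*π)

/-- `tau x = x + 2jπ`, where `j` is the unique integer with `x + 2jπ ∈ E`. -/
def tau (x : ℝ) : ℝ :=
  if x - 2*π*(⌊x/(2*π)⌋ : ℝ) < π then x - 2*π*(⌊x/(2*π)⌋ : ℝ) - 2*π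
  else x - 2*π*(⌊x/(2*π)⌋ : ℝ)

/-- `delta x = 2^k x`, where (for `x ≠ 0`) `k` is the unique integer with `2^k x ∈ E`. -/
def delta (x : ℝ) : ℝ :=
  if 0 < x then (2:ℝ)^(⌈Real.logb 2 (π/x)⌉) * x
  else (2:ℝ)^(⌊Real.logb 2 (2*π/(-x))⌋) * x

/-- The map `ξ : E → [0,1)`. -/
def xiMap (x : ℝ) : ℝ := if x < 0 then x/(2*π) + 1 else x/(2*π)

/-- The inverse `ξ⁻¹ : [0,1) → E`. -/
def xiInv (y : ℝ) : ℝ := if y < 1/2 then 2*π*(y-1) else 2*π*y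

/-- The translates `{W + 2kπ}_{k ∈ ℤ}` form a partition of `ℝ`. -/
def TransPartition (W : Set ℝ) : Prop :=
  (⋃ k : ℤ, (fun x : ℝ => x + 2*π*(k:ℝ)) '' W) = univ ∧
  Pairwise fun k l : ℤ =>
    Disjoint ((fun x : ℝ => x + 2*π*(k:ℝ)) '' W) ((fun x : ℝ => x + 2*π*(l:ℝ)) '' W)

/-- The dilates `{2^k W}_{k ∈ ℤ}` form a partition of `ℝ \ {0}`. -/
def DilPartition (W : Set ℝ) : Prop :=
  (⋃ k : ℤ, (fun x : ℝ => (2:ℝ)^k * x) '' W) = {(0:ℝ)}ᶜ ∧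
  Pairwise fun k l : ℤ =>
    Disjoint ((fun x : ℝ => (2:ℝ)^k * x) '' W) ((fun x : ℝ => (2:ℝ)^l * x) '' W)

/-- A regularized wavelet set. -/
def IsRegularizedWaveletSet (W : Set ℝ) : Prop :=
  MeasurableSet W ∧ TransPartition W ∧ DilPartition W

/-- The wavelet induced isomorphism `h̃_W = ξ ∘ τ|_W ∘ (δ|_W)⁻¹ ∘ ξ⁻¹` of `[0,1)`. -/
def hIso (W : Set ℝ) : ℝ → ℝ :=
  fun t => xiMap (tau (Function.invFunOn delta W (xiInv t)))

/-- The class of wavelet induced maps of `[0,1)` (Proposition 2.3 (i)-(ii)). -/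
def IsWaveletInduced (h : ℝ → ℝ) : Prop :=
  Set.BijOn h (Ico (0:ℝ) 1) (Ico (0:ℝ) 1) ∧
  Measurable ((Ico (0:ℝ) 1).restrict h) ∧
  ∃ A B : ℤ → Set ℝ,
    (∀ k, MeasurableSet (A k)) ∧ (∀ k, MeasurableSet (B k)) ∧
    (⋃ k, A k) = Ico (1/2 : ℝ) 1 ∧ Pairwise (Function.onFun Disjoint A) ∧
    (⋃ k, B k) = Ico (0:ℝ) (1/2) ∧ Pairwise (Function.onFun Disjoint B) ∧
    (∀ k, ∀ x ∈ A k, h x = Int.fract ((2:ℝ)^k * x)) ∧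
    (∀ k, ∀ x ∈ B k, h x = Int.fract ((2:ℝ)^k * (x - 1)))

/-- The class `WI₁`. -/
def MemWI1 (f : ℝ → ℝ) : Prop :=
  ∃ A B : ℕ → Set ℝ,
    (∀ k, MeasurableSet (A k)) ∧ (∀ k, MeasurableSet (B k)) ∧
    (⋃ k, A k) = Ico (1/2 : ℝ) 1 ∧ Pairwise (Function.onFun Disjoint A) ∧
    (⋃ k, B k) = Ico (0:ℝ) (1/2) ∧ Pairwise (Function.onFun Disjoint B) ∧
    (∀ k, ∀ x ∈ A k, f x = x / 2^(k+1)) ∧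
    (∀ k, ∀ x ∈ B k, f x = (x - 1) / 2^(k+1) + 1)

/-- The class `WI₂`. -/
def MemWI2 (g : ℝ → ℝ) : Prop :=
  Measurable ((Ico (0:ℝ) 1).restrict g) ∧
  Set.MapsTo g (Ico (0:ℝ) 1) (Ico (0:ℝ) 1) ∧
  Set.InjOn g (Ico (0:ℝ) 1) ∧
  ∀ x ∈ Ico (0:ℝ) 1, ∃ k l : ℕ, g x = (x + l) / 2^k

/-- The Schröder–Cantor–Bernstein map `u ⋄ v` for injections between arbitrary types. -/
def scb {α β : Type*} (u : α → β) (v : β → α) : α → β :=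
  fun x =>
    if x ∈ ⋃ k : ℕ, (v ∘ u)^[k] '' (Set.range v)ᶜ then u x
    else if h2 : x ∈ Set.range v then Classical.choose h2
    else u x

/-- The Schröder–Cantor–Bernstein map `u ⋄ v` for maps of `[0,1)`. -/
def scbOn (u v : ℝ → ℝ) : ℝ → ℝ :=
  fun x =>
    if x ∈ ⋃ k : ℕ, (v ∘ u)^[k] '' (Ico (0:ℝ) 1 \ v '' (Ico (0:ℝ) 1)) then u x
    else Function.invFunOn v (Ico (0:ℝ) 1) x

/-- The metric `d` on wavelet sets. -/
def dws (W₁ W₂ : Set ℝ) : ℝ :=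
  Real.sqrt (volume (W₁ ∆ W₂)).toReal + Real.sqrt (∫ x in W₁ ∆ W₂, |x|⁻¹)

/-- The measure `ν` on `[0,1)` with density `(1-x)⁻¹` on `[0,1/2)` and `x⁻¹` on `[1/2,1)`. -/
def nuMeasure : Measure ℝ :=
  volume.withDensity (fun x =>
    ENNReal.ofReal (if x ∈ Ico (0:ℝ) (1/2) then (1-x)⁻¹
      else if x ∈ Ico (1/2:ℝ) 1 then x⁻¹ else 0))


section AuxIterNull
open scoped Pointwise

lemma vol_affine_image (a b : ℝ) (T : Set ℝ) :
    volume ((fun x => a * x + b) '' T) = ENNReal.ofReal |a| * volume T := by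
  have h1 : (fun x => a * x + b) '' T = (fun y => y + b) '' (a • T) := by
    rw [← image_smul, image_image]
    simp [smul_eq_mul]
  rw [h1, image_add_right, measure_preimage_add_right, Measure.addHaar_smul]
  simp

lemma piecewise_affine_image_le {ι : Type*} [Countable ι] (f : ℝ → ℝ) (P : ι → Set ℝ)
    (hP : ∀ n, MeasurableSet (P n)) (hd : Pairwise (Function.onFun Disjoint P))
    (S : Set ℝ) (hS : S ⊆ ⋃ n, P n) (r : ℝ)
    (ha : ∀ n, ∃ a b : ℝ, |a| ≤ r ∧ ∀ x ∈ P n, f x = a * x + b) :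
    volume (f '' S) ≤ ENNReal.ofReal r * volume S := by
  have hcover : f '' S ⊆ ⋃ n, f '' (S ∩ P n) := by
    rintro y ⟨x, hx, rfl⟩
    obtain ⟨n, hn⟩ := mem_iUnion.1 (hS hx)
    exact mem_iUnion.2 ⟨n, ⟨x, ⟨hx, hn⟩, rfl⟩⟩
  calc volume (f '' S) ≤ ∑' n, volume (f '' (S ∩ P n)) :=
        (measure_mono hcover).trans (measure_iUnion_le _)
    _ ≤ ∑' n, ENNReal.ofReal r * volume (S ∩ P n) := by
        refine ENNReal.tsum_le_tsum fun n => ?_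
        obtain ⟨a, b, hab, hfa⟩ := ha n
        have h2 : f '' (S ∩ P n) = (fun x => a * x + b) '' (S ∩ P n) :=
          image_congr fun x hx => hfa x hx.2
        rw [h2, vol_affine_image]
        exact mul_le_mul_left (ENNReal.ofReal_le_ofReal hab) _
    _ = ENNReal.ofReal r * ∑' n, volume (S ∩ P n) := ENNReal.tsum_mul_left
    _ ≤ ENNReal.ofReal r * volume S := by
        refine mul_le_mul_right ?_ _
        have h3 : ∀ n, volume (S ∩ P n) = (volume.restrict S) (P n) := fun n => by
          rw [Measure.restrict_apply (hP n), inter_comm]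
        calc ∑' n, volume (S ∩ P n) = ∑' n, (volume.restrict S) (P n) := by
              simp only [h3]
          _ = (volume.restrict S) (⋃ n, P n) := (measure_iUnion hd hP).symm
          _ ≤ (volume.restrict S) univ := measure_mono (subset_univ _)
          _ = volume S := by rw [Measure.restrict_apply_univ]

lemma u_step (u : ℝ → ℝ) (hu : MemWI1 u) (S : Set ℝ) (hS : S ⊆ Ico (0:ℝ) 1) :
    u '' S ⊆ Ico (0:ℝ) 1 ∧ volume (u '' S) ≤ ENNReal.ofReal (1/2) * volume S := by
  obtain ⟨A, B, hAm, hBm, hAU, hAd, hBU, hBd, hfA, hfB⟩ := hu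
  have hAsub : ∀ k, A k ⊆ Ico (1/2:ℝ) 1 := fun k => hAU ▸ subset_iUnion A k
  have hBsub : ∀ k, B k ⊆ Ico (0:ℝ) (1/2) := fun k => hBU ▸ subset_iUnion B k
  have hsplit : ∀ x ∈ Ico (0:ℝ) 1, (∃ k, x ∈ A k) ∨ (∃ k, x ∈ B k) := by
    intro x hx
    by_cases h : x ∈ Ico (1/2:ℝ) 1
    · left; rw [← hAU] at h; exact mem_iUnion.1 h
    · right
      have hlt : x < 1/2 := by
        by_contra hlt
        exact h ⟨le_of_not_gt hlt, hx.2⟩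
      have : x ∈ Ico (0:ℝ) (1/2) := ⟨hx.1, hlt⟩
      rw [← hBU] at this; exact mem_iUnion.1 this
  have hc0 : ∀ k : ℕ, (0:ℝ) < 2^(k+1) := fun k => by positivity
  have hc2 : ∀ k : ℕ, (2:ℝ) ≤ 2^(k+1) := fun k => by
    calc (2:ℝ) = 2^1 := (pow_one 2).symm
      _ ≤ 2^(k+1) := pow_le_pow_right₀ (by norm_num) (by omega)
  constructor
  · rintro y ⟨x, hx, rfl⟩
    rcases hsplit x (hS hx) with ⟨k, hk⟩ | ⟨k, hk⟩
    · rw [hfA k x hk]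
      obtain ⟨h1, h2⟩ := hAsub k hk
      constructor
      · positivity
      · rw [div_lt_one (hc0 k)]; linarith [hc2 k]
    · rw [hfB k x hk]
      obtain ⟨h1, h2⟩ := hBsub k hk
      constructor
      · have h := (le_div_iff₀ (hc0 k)).2 (by nlinarith [hc2 k] : (-1:ℝ) * 2^(k+1) ≤ x - 1)
        linarith
      · have h := div_neg_of_neg_of_pos (by linarith : x - 1 < 0) (hc0 k)
        linarith
  · set P : ℕ ⊕ ℕ → Set ℝ := Sum.elim A B with hP
    refine piecewise_affine_image_le u P ?_ ?_ S ?_ (1/2) ?_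
    · rintro (k | k) <;> simpa [hP] using by first | exact hAm k | exact hBm k
    · have hAB : ∀ k l, Disjoint (A k) (B l) := fun k l =>
        ((by rw [Set.Ico_disjoint_Ico]; norm_num : Disjoint (Ico (0:ℝ) (1/2)) (Ico (1/2:ℝ) 1)).symm).mono (hAsub k) (hBsub l)
      rintro (k | k) (l | l) hne <;> simp only [Function.onFun, hP, Sum.elim_inl, Sum.elim_inr]
      · exact hAd (fun h => hne (by rw [h]))
      · exact hAB k l
      · exact (hAB l k).symm
      · exact hBd (fun h => hne (by rw [h]))
    · intro x hx
      rcases hsplit x (hS hx) with ⟨k, hk⟩ | ⟨k, hk⟩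
      · exact mem_iUnion.2 ⟨Sum.inl k, hk⟩
      · exact mem_iUnion.2 ⟨Sum.inr k, hk⟩
    · have habs : ∀ k : ℕ, |((2:ℝ)^(k+1))⁻¹| ≤ 1/2 := fun k => by
        rw [abs_of_pos (by positivity), show (1:ℝ)/2 = (2:ℝ)⁻¹ by norm_num]
        exact inv_anti₀ (by norm_num) (hc2 k)
      rintro (k | k)
      · exact ⟨((2:ℝ)^(k+1))⁻¹, 0, habs k, fun x hx => by
          rw [show P (Sum.inl k) = A k from rfl] at hx
          rw [hfA k x hx]; ring⟩
      · exact ⟨((2:ℝ)^(k+1))⁻¹, 1 - ((2:ℝ)^(k+1))⁻¹, habs k, fun x hx => by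
          rw [show P (Sum.inr k) = B k from rfl] at hx
          rw [hfB k x hx]; ring⟩

lemma v_step (v : ℝ → ℝ) (hv : MemWI2 v) (S : Set ℝ) (hS : S ⊆ Ico (0:ℝ) 1) :
    volume (v '' S) ≤ volume S := by
  obtain ⟨hm, hmap, hinj, hrep⟩ := hv
  set T : ℕ × ℕ → Set ℝ := fun p =>
    Subtype.val '' {y : Ico (0:ℝ) 1 | (Ico (0:ℝ) 1).restrict v y = ((y:ℝ) + p.2) / 2^p.1}
    with hT
  have hTm : ∀ p, MeasurableSet (T p) := by
    intro p
    apply MeasurableSet.subtype_image measurableSet_Ico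
    exact measurableSet_eq_fun hm ((measurable_subtype_coe.add_const _).div_const _)
  have hTmem : ∀ p : ℕ × ℕ, ∀ x, x ∈ T p ↔ x ∈ Ico (0:ℝ) 1 ∧ v x = (x + p.2) / 2^p.1 := by
    intro p x
    constructor
    · rintro ⟨y, hy, rfl⟩; exact ⟨y.2, hy⟩
    · rintro ⟨hx, hvx⟩; exact ⟨⟨x, hx⟩, hvx, rfl⟩
  set e := Denumerable.eqv (ℕ × ℕ) with he
  set D : ℕ → Set ℝ := disjointed (fun n => T (e.symm n)) with hD
  have hDm : ∀ n, MeasurableSet (D n) := MeasurableSet.disjointed (fun n => hTm _)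
  have hcalc := piecewise_affine_image_le v D hDm (disjoint_disjointed _) S ?_ 1 ?_
  · calc volume (v '' S) ≤ ENNReal.ofReal 1 * volume S := hcalc
      _ = volume S := by rw [ENNReal.ofReal_one, one_mul]
  · intro x hx
    obtain ⟨k, l, hkl⟩ := hrep x (hS hx)
    have : x ∈ T (k, l) := (hTmem (k, l) x).2 ⟨hS hx, hkl⟩
    rw [hD, iUnion_disjointed]
    exact mem_iUnion.2 ⟨e (k, l), by simpa using this⟩
  · intro n
    refine ⟨((2:ℝ)^(e.symm n).1)⁻¹, ((e.symm n).2 : ℝ) / 2^(e.symm n).1, ?_, ?_⟩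
    · rw [abs_of_pos (by positivity)]
      exact inv_le_one_of_one_le₀ ((by { calc (1:ℝ) = 1^(e.symm n).1 := (one_pow _).symm
        _ ≤ 2^(e.symm n).1 := pow_le_pow_left₀ (by norm_num) (by norm_num) _ }))
    · intro x hx
      have hx' : x ∈ T (e.symm n) := disjointed_subset _ n hx
      rw [((hTmem _ x).1 hx').2]
      ring


end AuxIterNull

/-- For every `u ∈ WI₁` and `v ∈ WI₂`, the set `⋂_{k≥0} (v∘u)^k([0,1))` is
Lebesgue null. -/
theorem iInter_iterate_null (u v : ℝ → ℝ) (hu : MemWI1 u) (hv : MemWI2 v) :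
    volume (⋂ k : ℕ, (v ∘ u)^[k] '' Ico (0:ℝ) 1) = 0 := by
  set J := Ico (0:ℝ) 1 with hJdef
  have hJ : volume J = 1 := by simp [hJdef]
  have key : ∀ k : ℕ, (v ∘ u)^[k] '' J ⊆ J ∧
      volume ((v ∘ u)^[k] '' J) ≤ (ENNReal.ofReal (1/2))^k := by
    intro k
    induction k with
    | zero => simpa using le_of_eq hJ
    | succ k ih =>
      obtain ⟨hsub, hvol⟩ := ih
      have himg : (v ∘ u)^[k+1] '' J = v '' (u '' ((v ∘ u)^[k] '' J)) := by
        rw [Function.iterate_succ', Function.comp_assoc]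
        rw [image_comp, image_comp]
      obtain ⟨husub, huvol⟩ := u_step u hu _ hsub
      constructor
      · rw [himg]
        exact (image_mono husub).trans (hv.2.1.image_subset)
      · rw [himg]
        calc volume (v '' (u '' ((v ∘ u)^[k] '' J))) ≤ volume (u '' ((v ∘ u)^[k] '' J)) :=
              v_step v hv _ husub
          _ ≤ ENNReal.ofReal (1/2) * volume ((v ∘ u)^[k] '' J) := huvol
          _ ≤ ENNReal.ofReal (1/2) * (ENNReal.ofReal (1/2))^k := mul_le_mul_right hvol _
          _ = (ENNReal.ofReal (1/2))^(k+1) := (pow_succ' _ _).symm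
  have hle : ∀ k : ℕ, volume (⋂ k : ℕ, (v ∘ u)^[k] '' J) ≤ (ENNReal.ofReal (1/2))^k :=
    fun k => (measure_mono (iInter_subset _ k)).trans (key k).2
  have htend : Tendsto (fun k : ℕ => (ENNReal.ofReal (1/2))^k) atTop (nhds 0) :=
    ENNReal.tendsto_pow_atTop_nhds_zero_of_lt_one (by rw [ENNReal.ofReal_lt_one]; norm_num)
  exact le_antisymm (ge_of_tendsto' htend hle) zero_le


end
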